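/- Let R = ℚ[x_1,...,x_m]/I be the cohomology ring of an m-stage generalized Bott manifold, with last fiber dimension n_m, and let c = c_1(ξ_m) = ∑_{j=1}^{n_m} ∑_{k<m} a^m_{jk} x_k ∈ R. If b ≠ 0 is a rational number and w is a linear combination of x_1,...,x_{m-1} such that (b·x_m + w)^{n_m+1} = 0 in R, then (n_m+1)·w = b·c. Consequently, the set of such elements b·x_m + w lies in a one-dimensional subspace of the degree-2 part of R. -/
import Mathlib


set_option maxHeartbeats 1000000
set_option synthInstance.maxHeartbeats 200000

open MvPolynomial TrivSqZeroExt DualNumber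

/-- The defining ideal of the rational cohomology ring of a generalized Bott manifold. -/
noncomputable def genBottIdeal (m : ℕ) (n : Fin m → ℕ)
    (a : (i : Fin m) → Fin (n i) → Fin m → ℚ) :
    Ideal (MvPolynomial (Fin m) ℚ) :=
  Ideal.span (Set.range fun i : Fin m =>
    X i * ∏ j : Fin (n i), ((∑ k : Fin m, C (a i j k) * X k) + X i))

lemma sqZero_prod {R ι : Type*} [CommRing R] (s : Finset ι) (x : R) (b : ι → R)
    (hb : ∀ i j, b i * b j = 0) :
    ∏ j ∈ s, (x + b j) = x ^ s.card + x ^ (s.card - 1) * ∑ j ∈ s, b j := by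
  classical
  induction s using Finset.induction with
  | empty => simp
  | @insert a s has ih =>
    rw [Finset.prod_insert has, ih, Finset.card_insert_of_notMem has,
      Finset.sum_insert has]
    have hbs : b a * ∑ j ∈ s, b j = 0 := by
      rw [Finset.mul_sum]; exact Finset.sum_eq_zero fun j _ => hb a j
    rcases Nat.eq_zero_or_pos s.card with h0 | hpos
    · obtain rfl : s = ∅ := Finset.card_eq_zero.mp h0
      simp
    · have h1 : x * x ^ (s.card - 1) = x ^ s.card := by
        rw [← pow_succ']; congr 1; omega
      calc (x + b a) * (x ^ s.card + x ^ (s.card - 1) * ∑ j ∈ s, b j)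
          = x * x ^ s.card + (x * x ^ (s.card - 1)) * ∑ j ∈ s, b j
            + b a * x ^ s.card + x ^ (s.card - 1) * (b a * ∑ j ∈ s, b j) := by ring
        _ = x ^ (s.card + 1) + x ^ (s.card + 1 - 1) * (b a + ∑ j ∈ s, b j) := by
            rw [hbs, h1, ← pow_succ']; simp; ring

lemma sqZero_pow {R : Type*} [CommRing R] (x β : R) (hβ : β * β = 0) (N : ℕ) :
    (x + β) ^ N = x ^ N + x ^ (N - 1) * (N • β) := by
  have := sqZero_prod (Finset.range N) x (fun _ => β) (fun _ _ => hβ)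
  simpa using this

lemma dualNumber_mul_eq {R : Type*} [CommRing R] {z : DualNumber R} {g1 g2 h1 h2 : R}
    (h : z * (TrivSqZeroExt.inl g1 + TrivSqZeroExt.inl g2 * DualNumber.eps)
      = TrivSqZeroExt.inl h1 + TrivSqZeroExt.inl h2 * DualNumber.eps) :
    TrivSqZeroExt.fst z * g1 = h1 ∧
      TrivSqZeroExt.fst z * g2 + TrivSqZeroExt.snd z * g1 = h2 := by
  constructor
  · have := congrArg TrivSqZeroExt.fst h
    simpa using this
  · have := congrArg TrivSqZeroExt.snd h
    simpa [smul_eq_mul, MulOpposite.smul_eq_mul_unop, mul_comm] using this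

lemma key (m : ℕ) (n : Fin m → ℕ) (hn : ∀ i, 1 ≤ n i)
    (a : (i : Fin m) → Fin (n i) → Fin m → ℚ)
    (ha : ∀ i j k, ¬ k < i → a i j k = 0)
    (L : Fin m) (hL : ∀ r : Fin m, ¬ L < r)
    (b : ℚ) (w : Fin m → ℚ) (hb : b ≠ 0) (hwL : w L = 0)
    (hmem : (C b * X L + ∑ r, C (w r) * X r) ^ (n L + 1) ∈ genBottIdeal m n a)
    (k : Fin m) (hk : k ≠ L) :
    ((n L : ℚ) + 1) * w k = b * ∑ j : Fin (n L), a L j k := by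
  classical
  obtain ⟨p, hp⟩ := Ideal.mem_span_range_iff_exists_fun.mp hmem
  set N := n L with hN
  set f : Fin m → DualNumber (Polynomial ℚ) := fun i =>
    if i = L then inl Polynomial.X else if i = k then ε else 0 with hf
  set φ : MvPolynomial (Fin m) ℚ →ₐ[ℚ] DualNumber (Polynomial ℚ) := aeval f with hφ
  have hfL : f L = inl Polynomial.X := by simp [hf]
  have hfk : f k = ε := by simp [hf, hk]
  have halg : ∀ q : ℚ, algebraMap ℚ (DualNumber (Polynomial ℚ)) q = inl (Polynomial.C q) := by
    intro q; rw [algebraMap_eq_inl']; norm_cast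
  have ε2 : (ε : DualNumber (Polynomial ℚ)) * ε = 0 := eps_mul_eps
  have hpair : ∀ c1 c2 : Polynomial ℚ,
      (inl c1 * ε : DualNumber (Polynomial ℚ)) * (inl c2 * ε) = 0 := by
    intro c1 c2; rw [mul_mul_mul_comm, ε2, mul_zero]
  -- the image of the generic linear form
  have hsum : ∀ (i : Fin m) (j : Fin (n i)),
      φ (∑ r, C (a i j r) * X r) = inl (Polynomial.C (a i j k)) * ε := by
    intro i j
    rw [map_sum, Finset.sum_eq_single k]
    · simp [hφ, hfk, halg]
    · intro r _ hr
      by_cases hrL : r = L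
      · have h0 : a i j r = 0 := by rw [hrL]; exact ha i j L (hL i)
        simp [hφ, h0]
      · have : f r = 0 := by simp [hf, hrL, hr]
        simp [hφ, this]
    · simp
  -- the image of w
  have hw : φ (∑ r, C (w r) * X r) = inl (Polynomial.C (w k)) * ε := by
    rw [map_sum, Finset.sum_eq_single k]
    · simp [hφ, hfk, halg]
    · intro r _ hr
      by_cases hrL : r = L
      · have h0 : w r = 0 := by rw [hrL]; exact hwL
        simp [hφ, h0]
      · have : f r = 0 := by simp [hf, hrL, hr]
        simp [hφ, this]
    · simp
  -- image of the k-th generator vanishes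
  have hgk : φ (X k * ∏ j : Fin (n k), ((∑ r, C (a k j r) * X r) + X k)) = 0 := by
    rw [map_mul, map_prod]
    have hfac : ∀ j : Fin (n k), φ ((∑ r, C (a k j r) * X r) + X k) = ε := by
      intro j
      have h0 : a k j k = 0 := ha k j k (lt_irrefl k)
      rw [map_add, hsum k j, h0]
      simp [hφ, hfk]
    rw [Finset.prod_congr rfl (fun j _ => hfac j), Finset.prod_const, Finset.card_univ,
      Fintype.card_fin]
    have : φ (X k) = ε := by simp [hφ, hfk]
    rw [this]
    obtain ⟨d, hd⟩ : ∃ d, n k = d + 1 := ⟨n k - 1, by have := hn k; omega⟩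
    rw [hd, pow_succ', ← mul_assoc, ε2, zero_mul]
  -- image of the L-th generator
  set cK : ℚ := ∑ j : Fin (n L), a L j k with hcK
  have hgL : φ (X L * ∏ j : Fin (n L), ((∑ r, C (a L j r) * X r) + X L))
      = inl (Polynomial.X ^ (N + 1))
        + inl (Polynomial.X ^ N * Polynomial.C cK) * ε := by
    rw [map_mul, map_prod]
    have hfac : ∀ j : Fin (n L), φ ((∑ r, C (a L j r) * X r) + X L)
        = inl Polynomial.X + inl (Polynomial.C (a L j k)) * ε := by
      intro j
      rw [map_add, hsum L j]
      have : φ (X L) = inl Polynomial.X := by simp [hφ, hfL]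
      rw [this]; ring
    rw [Finset.prod_congr rfl (fun j _ => hfac j),
      sqZero_prod _ _ _ (fun i j => hpair _ _), Finset.card_univ, Fintype.card_fin]
    have hXL : φ (X L) = inl Polynomial.X := by simp [hφ, hfL]
    rw [hXL]
    have hsml : (∑ j : Fin (n L), (inl (Polynomial.C (a L j k)) * ε
          : DualNumber (Polynomial ℚ))) = inl (Polynomial.C cK) * ε := by
      rw [← Finset.sum_mul]
      congr 1
      rw [hcK, map_sum]
      exact (map_sum (TrivSqZeroExt.inlHom (Polynomial ℚ) (Polynomial ℚ))
        (fun i => Polynomial.C (a L i k)) Finset.univ).symm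
    rw [hsml]
    have hXN : Polynomial.X * Polynomial.X ^ (N - 1) = (Polynomial.X : Polynomial ℚ) ^ N := by
      rw [← pow_succ']; congr 1; have := hn L; omega
    calc inl Polynomial.X * (inl Polynomial.X ^ N
          + inl Polynomial.X ^ (N - 1) * (inl (Polynomial.C cK) * ε))
        = inl Polynomial.X * inl Polynomial.X ^ N
          + (inl Polynomial.X * inl Polynomial.X ^ (N - 1) * inl (Polynomial.C cK)) * ε := by
          ring
      _ = inl (Polynomial.X ^ (N + 1)) + inl (Polynomial.X ^ N * Polynomial.C cK) * ε := by
          rw [inl_pow, inl_pow, inl_mul_inl, inl_mul_inl, inl_mul_inl, hXN, ← pow_succ']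
  -- image of P and its power
  have hP : φ (C b * X L + ∑ r, C (w r) * X r)
      = inl (Polynomial.C b * Polynomial.X) + inl (Polynomial.C (w k)) * ε := by
    rw [map_add, map_mul, hw]
    have h1 : φ (C b) = inl (Polynomial.C b) := by
      simp [hφ, algebraMap_eq_inl']
    have h2 : φ (X L) = inl Polynomial.X := by simp [hφ, hfL]
    rw [h1, h2, inl_mul_inl]
  have hPpow : φ (C b * X L + ∑ r, C (w r) * X r) ^ (N + 1)
      = inl ((Polynomial.C b * Polynomial.X) ^ (N + 1))
        + inl ((Polynomial.C b * Polynomial.X) ^ N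
            * ((N + 1 : ℕ) • Polynomial.C (w k))) * ε := by
    rw [hP, sqZero_pow _ _ (hpair _ _) (N + 1)]
    congr 1
    · rw [inl_pow]
    · rw [Nat.add_sub_cancel, inl_pow, ← smul_mul_assoc, ← mul_assoc]
      have hns : ((N + 1) • (inl (Polynomial.C (w k))) : DualNumber (Polynomial ℚ))
          = inl ((N + 1) • Polynomial.C (w k)) := by
        exact (map_nsmul (TrivSqZeroExt.inlHom (Polynomial ℚ) (Polynomial ℚ)) _ _).symm
      rw [hns, inl_mul_inl]
  -- apply φ to the decomposition
  have heq := congrArg φ hp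
  rw [map_sum, map_pow] at heq
  rw [Finset.sum_eq_single_of_mem L (Finset.mem_univ L)] at heq
  · rw [map_mul, hgL, hPpow] at heq
    obtain ⟨h1, h2⟩ := dualNumber_mul_eq heq
    -- first component determines the leading coefficient
    have hA : fst (φ (p L)) = Polynomial.C (b ^ (N + 1)) := by
      have hX : (Polynomial.X : Polynomial ℚ) ^ (N + 1) ≠ 0 :=
        pow_ne_zero _ Polynomial.X_ne_zero
      apply mul_right_cancel₀ hX
      rw [h1, mul_pow, Polynomial.C_pow]
    rw [hA] at h2
    -- take the coefficient of X^N
    have hco := congrArg (fun q => Polynomial.coeff q N) h2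
    simp only [Polynomial.coeff_add] at hco
    have e1 : (Polynomial.C (b ^ (N + 1)) * (Polynomial.X ^ N * Polynomial.C cK)).coeff N
        = b ^ (N + 1) * cK := by
      rw [show Polynomial.C (b ^ (N + 1)) * (Polynomial.X ^ N * Polynomial.C cK)
          = Polynomial.C (b ^ (N + 1) * cK) * Polynomial.X ^ N by rw [Polynomial.C_mul]; ring]
      rw [Polynomial.coeff_C_mul, Polynomial.coeff_X_pow, if_pos rfl, mul_one]
    have e2 : (snd (φ (p L)) * Polynomial.X ^ (N + 1)).coeff N = 0 := by
      rw [Polynomial.coeff_mul_X_pow', if_neg (by omega)]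
    have e3 : ((Polynomial.C b * Polynomial.X) ^ N
          * ((N + 1 : ℕ) • Polynomial.C (w k))).coeff N
        = b ^ N * (((N : ℚ) + 1) * w k) := by
      have h4 : ((N + 1 : ℕ) • Polynomial.C (w k) : Polynomial ℚ)
          = Polynomial.C (((N : ℚ) + 1) * w k) := by
        rw [← map_nsmul Polynomial.C, nsmul_eq_mul]
        norm_cast
      rw [show (Polynomial.C b * Polynomial.X) ^ N * ((N + 1 : ℕ) • Polynomial.C (w k))
          = Polynomial.C (b ^ N * (((N : ℚ) + 1) * w k)) * Polynomial.X ^ N by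
        rw [mul_pow, ← Polynomial.C_pow, h4]
        conv_rhs => rw [Polynomial.C_mul]
        ring]
      rw [Polynomial.coeff_C_mul, Polynomial.coeff_X_pow, if_pos rfl, mul_one]
    rw [e1, e2, e3] at hco
    -- cancel b ^ N
    apply mul_left_cancel₀ (pow_ne_zero N hb)
    linear_combination -hco
  · intro i _ hi
    rcases eq_or_ne i k with rfl | hik
    · rw [map_mul, hgk, mul_zero]
    · have hfi : f i = 0 := by simp [hf, hi, hik]
      have hXi : φ (X i) = 0 := by simp [hφ, hfi]
      rw [map_mul, map_mul, hXi, zero_mul, mul_zero]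

/-- Lemma 4: let `c = c_1(ξ_m)`.  If `b ≠ 0` and `w` is a linear combination of
`x_1,…,x_{m-1}` with `(b x_m + w)^{n_m+1} = 0`, then `(n_m+1) w = b c`; consequently all
such elements `b x_m + w` lie in a one-dimensional subspace of the degree-two part. -/
theorem stmt_10 (m : ℕ) (hm : 0 < m) (n : Fin m → ℕ) (hn : ∀ i, 1 ≤ n i)
    (a : (i : Fin m) → Fin (n i) → Fin m → ℚ)
    (ha : ∀ i j k, ¬ k < i → a i j k = 0)
    (L : Fin m) (hL : (L : ℕ) = m - 1)
    (c : MvPolynomial (Fin m) ℚ)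
    (hc : c = ∑ j : Fin (n L), ∑ k : Fin m, C (a L j k) * X k) :
    (∀ (b : ℚ) (w : Fin m → ℚ), b ≠ 0 → w L = 0 →
      (Ideal.Quotient.mk (genBottIdeal m n a)
          (C b * X L + ∑ k, C (w k) * X k)) ^ (n L + 1) = 0 →
      Ideal.Quotient.mk (genBottIdeal m n a)
          (C ((n L : ℚ) + 1) * ∑ k, C (w k) * X k) =
        Ideal.Quotient.mk (genBottIdeal m n a) (C b * c)) ∧
    ∃ W : Submodule ℚ (MvPolynomial (Fin m) ℚ ⧸ genBottIdeal m n a),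
      Module.finrank ℚ W ≤ 1 ∧
      ∀ (b : ℚ) (w : Fin m → ℚ), b ≠ 0 → w L = 0 →
        (Ideal.Quotient.mk (genBottIdeal m n a)
            (C b * X L + ∑ k, C (w k) * X k)) ^ (n L + 1) = 0 →
        Ideal.Quotient.mk (genBottIdeal m n a)
            (C b * X L + ∑ k, C (w k) * X k) ∈ W := by
  classical
  have hLmax : ∀ r : Fin m, ¬ L < r := by
    intro r hr
    have h1 : (L : ℕ) < (r : ℕ) := hr
    have h2 := r.isLt
    omega
  have hq : ((n L : ℚ) + 1) ≠ 0 := by positivity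
  have hpoly : ∀ (b : ℚ) (w : Fin m → ℚ), b ≠ 0 → w L = 0 →
      (Ideal.Quotient.mk (genBottIdeal m n a)
          (C b * X L + ∑ k, C (w k) * X k)) ^ (n L + 1) = 0 →
      C ((n L : ℚ) + 1) * ∑ k, C (w k) * X k = C b * c := by
    intro b w hb hwL hpow
    have hmem : (C b * X L + ∑ r, C (w r) * X r) ^ (n L + 1) ∈ genBottIdeal m n a := by
      rw [← map_pow] at hpow
      exact Ideal.Quotient.eq_zero_iff_mem.mp hpow
    have hkey : ∀ k : Fin m, ((n L : ℚ) + 1) * w k = b * ∑ j : Fin (n L), a L j k := by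
      intro k
      rcases eq_or_ne k L with rfl | hkL
      · rw [hwL, mul_zero]
        have h0 : ∀ j : Fin (n k), a k j k = 0 := fun j => ha k j k (lt_irrefl k)
        rw [Finset.sum_congr rfl fun j _ => h0 j]
        simp
      · exact key m n hn a ha L hLmax b w hb hwL hmem k hkL
    have e2 : (C b : MvPolynomial (Fin m) ℚ) * ∑ j : Fin (n L), ∑ k, C (a L j k) * X k
        = ∑ k, C (b * ∑ j : Fin (n L), a L j k) * X k := by
      rw [Finset.sum_comm, Finset.mul_sum]
      refine Finset.sum_congr rfl fun k _ => ?_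
      rw [← Finset.sum_mul, C_mul, map_sum, mul_assoc]
    rw [hc, e2, Finset.mul_sum]
    refine Finset.sum_congr rfl fun k _ => ?_
    rw [← mul_assoc, ← C_mul, hkey k]
  constructor
  · intro b w hb hwL hpow
    exact congrArg _ (hpoly b w hb hwL hpow)
  · refine ⟨Submodule.span ℚ {Ideal.Quotient.mk (genBottIdeal m n a)
        (X L + C (((n L : ℚ) + 1)⁻¹) * c)}, ?_, ?_⟩
    · have h := finrank_span_le_card (R := ℚ)
        ({Ideal.Quotient.mk (genBottIdeal m n a)
          (X L + C (((n L : ℚ) + 1)⁻¹) * c)} : Set (MvPolynomial (Fin m) ℚ ⧸ genBottIdeal m n a))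
      simpa using h
    · intro b w hb hwL hpow
      have hS : (∑ k, C (w k) * X k : MvPolynomial (Fin m) ℚ)
          = C (((n L : ℚ) + 1)⁻¹) * (C b * c) := by
        rw [← hpoly b w hb hwL hpow, ← mul_assoc, ← C_mul, inv_mul_cancel₀ hq, C_1, one_mul]
      have hfactor : (C b * X L + ∑ k, C (w k) * X k : MvPolynomial (Fin m) ℚ)
          = C b * (X L + C (((n L : ℚ) + 1)⁻¹) * c) := by
        rw [hS]; ring
      have hsm : Ideal.Quotient.mk (genBottIdeal m n a)
            (C b * (X L + C (((n L : ℚ) + 1)⁻¹) * c))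
          = b • Ideal.Quotient.mk (genBottIdeal m n a)
            (X L + C (((n L : ℚ) + 1)⁻¹) * c) := by
        rw [map_mul, ← MvPolynomial.algebraMap_eq, Ideal.Quotient.mk_algebraMap,
          ← Algebra.smul_def]
      rw [hfactor, hsm]
      exact Submodule.smul_mem _ b (Submodule.mem_span_singleton_self _)
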